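/- (van der Put expansion) For every f ∈ C(ℤ_p, ℚ_p), the series Σ_{n=0}^∞ v_n·e_n converges uniformly (i.e. in sup-norm) to f, where v_0 = f(0) and, for n ≥ 1, v_n = f(n) − f(n_−). -/

import Mathlib

/-- The van der Put basis function `e_n : ℤ_[p] → ℚ_[p]`: `e_0 = 1` and, for `n ≥ 1`,
`e_n` is the characteristic function of the disc `D_n = {x ∈ ℤ_[p] : |x - n|_p < 1/n}`. -/
noncomputable def vdpE (p : ℕ) [Fact p.Prime] (n : ℕ) : ℤ_[p] → ℚ_[p] :=
  if n = 0 then fun _ => 1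
  else Set.indicator {x : ℤ_[p] | ‖x - (n : ℤ_[p])‖ < 1 / (n : ℝ)} fun _ => 1

/-- For `n ≥ 1` with base-`p` expansion `n = n_0 + n_1 p + ⋯ + n_s p^s` (`n_s ≠ 0`),
`n_- = n - n_s p^s`, i.e. the remainder of `n` modulo `p^s` where `p^s` is the largest
power of `p` with `p^s ≤ n`. -/
def nMinusDigit (p n : ℕ) : ℕ := n % p ^ Nat.log p n

/-- The van der Put coefficients: `v_0 = f(0)` and `v_n = f(n) - f(n_-)` for `n ≥ 1`. -/
noncomputable def vdpCoeff (p : ℕ) [Fact p.Prime] (f : ℤ_[p] → ℚ_[p]) (n : ℕ) : ℚ_[p] :=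
  if n = 0 then f 0 else f (n : ℤ_[p]) - f ((nMinusDigit p n : ℕ) : ℤ_[p])


section Aux

open PadicInt

variable {p : ℕ} [Fact p.Prime]

/-- Two naturals below `p^k` congruent mod `p^k` (inside `ℤ_[p]`) are equal. -/
lemma natEqOfPadicDvd {k a b : ℕ} (ha : a < p ^ k) (hb : b < p ^ k)
    (h : (p : ℤ_[p]) ^ k ∣ ((a : ℤ_[p]) - b)) : a = b := by
  have h' : (p : ℤ_[p]) ^ k ∣ (((a : ℤ) - (b : ℤ) : ℤ) : ℤ_[p]) := by push_cast; exact h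
  rw [PadicInt.pow_p_dvd_int_iff] at h'
  have h0 : ((a : ℤ) - b) = 0 := by
    refine Int.eq_zero_of_dvd_of_natAbs_lt_natAbs h' ?_
    have : ((p : ℤ) ^ k).natAbs = p ^ k := by
      rw [Int.natAbs_pow]; norm_num
    rw [this]
    omega
  omega

lemma apprStabilize (x : ℤ_[p]) {j N : ℕ} (hj : N ≤ j) (h : x.appr j < p ^ N) :
    x.appr j = x.appr N := by
  obtain ⟨c, hc⟩ := x.dvd_appr_sub_appr N j hj
  have hmono := x.appr_mono hj
  have hlt := x.appr_lt N
  have hz : x.appr j - x.appr N = 0 :=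
    Nat.eq_zero_of_dvd_of_lt ⟨c, hc⟩ (by omega)
  omega

/-- Index of the largest truncation of `x` that is `< N`. -/
noncomputable def truncIdx (x : ℤ_[p]) (N : ℕ) : ℕ := Nat.findGreatest (fun j => x.appr j < N) N

/-- The largest truncation of `x` that is `< N` (for `N ≥ 1`). -/
noncomputable def trunc (x : ℤ_[p]) (N : ℕ) : ℕ := x.appr (truncIdx x N)

lemma appr_zero' (x : ℤ_[p]) : x.appr 0 = 0 := by
  have := x.appr_lt 0; simpa using this

lemma trunc_lt {x : ℤ_[p]} {N : ℕ} (hN : 0 < N) : trunc x N < N := by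
  have h0 : x.appr 0 < N := by rw [appr_zero']; exact hN
  exact Nat.findGreatest_spec (P := fun j => x.appr j < N) (Nat.zero_le N) h0

lemma appr_le_trunc {x : ℤ_[p]} {N j : ℕ} (h : x.appr j < N) :
    x.appr j ≤ trunc x N := by
  have hN : 0 < N := lt_of_le_of_lt (Nat.zero_le _) h
  have key : ∀ i ≤ N, x.appr i < N → x.appr i ≤ trunc x N := by
    intro i hi hiN
    exact x.appr_mono (Nat.le_findGreatest hi hiN)
  by_cases hj : j ≤ N
  · exact key j hj h
  · push_neg at hj
    have hNle : N ≤ p ^ N := Nat.le_of_lt (Nat.lt_pow_self (n := N) (Fact.out : p.Prime).one_lt)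
    have heq : x.appr j = x.appr N := apprStabilize x hj.le (lt_of_lt_of_le h hNle)
    rw [heq] at h ⊢
    exact key N le_rfl h

lemma dvd_iff_appr_eq {x : ℤ_[p]} {k n : ℕ} (hn : n < p ^ k) :
    (p : ℤ_[p]) ^ k ∣ (x - (n : ℤ_[p])) ↔ x.appr k = n := by
  have hspec : (p : ℤ_[p]) ^ k ∣ (x - (x.appr k : ℤ_[p])) := by
    have := x.appr_spec k
    rwa [Ideal.mem_span_singleton] at this
  constructor
  · intro h
    refine natEqOfPadicDvd (x.appr_lt k) hn ?_
    have : (x.appr k : ℤ_[p]) - n = (x - n) - (x - x.appr k) := by ring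
    rw [this]
    exact dvd_sub h hspec
  · intro h
    rwa [h] at hspec

lemma mem_disc_iff {x : ℤ_[p]} {N : ℕ} (hN : N ≠ 0) :
    ‖x - (N : ℤ_[p])‖ < 1 / (N : ℝ) ↔ x.appr (Nat.log p N + 1) = N := by
  have hp : 1 < p := (Fact.out : p.Prime).one_lt
  set s := Nat.log p N with hs
  have hps : p ^ s ≤ N := Nat.pow_log_le_self p hN
  have hps' : N < p ^ (s + 1) := Nat.lt_pow_succ_log_self hp N
  have hNpos : (0 : ℝ) < N := by exact_mod_cast Nat.pos_of_ne_zero hN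
  have hppos : (0 : ℝ) < p := by positivity
  have key : ‖x - (N : ℤ_[p])‖ < 1 / (N : ℝ) ↔
      ‖x - (N : ℤ_[p])‖ ≤ (p : ℝ) ^ (-(s + 1 : ℕ) : ℤ) := by
    constructor
    · intro h
      rw [PadicInt.norm_le_pow_iff_norm_lt_pow_add_one]
      have e : (-(s + 1 : ℕ) : ℤ) + 1 = -(s : ℤ) := by push_cast; ring
      rw [e]
      refine lt_of_lt_of_le h ?_
      rw [zpow_neg, zpow_natCast, one_div]
      rw [inv_le_inv₀ hNpos (by positivity)]
      exact_mod_cast hps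
    · intro h
      refine lt_of_le_of_lt h ?_
      rw [zpow_neg, zpow_natCast, one_div]
      rw [inv_lt_inv₀ (by positivity) hNpos]
      exact_mod_cast hps'
  rw [key, PadicInt.norm_le_pow_iff_mem_span_pow, Ideal.mem_span_singleton,
    dvd_iff_appr_eq hps']

lemma appr_succ_log_eq {x : ℤ_[p]} {N j : ℕ} (hN : N ≠ 0) (hj : x.appr j = N) :
    x.appr (Nat.log p N + 1) = N := by
  have hp : 1 < p := (Fact.out : p.Prime).one_lt
  set s := Nat.log p N with hs
  have hps : p ^ s ≤ N := Nat.pow_log_le_self p hN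
  have hps' : N < p ^ (s + 1) := Nat.lt_pow_succ_log_self hp N
  have hsj : s + 1 ≤ j := by
    by_contra hc
    push_neg at hc
    have : p ^ j ≤ p ^ s := Nat.pow_le_pow_right (by omega) (by omega)
    have := x.appr_lt j
    omega
  obtain ⟨c, hc⟩ := x.dvd_appr_sub_appr (s + 1) j hsj
  have hmono := x.appr_mono hsj
  rw [hj] at hc hmono
  have hz : N - x.appr (s + 1) = 0 := Nat.eq_zero_of_dvd_of_lt ⟨c, hc⟩ (by omega)
  omega

lemma appr_log_eq_mod {x : ℤ_[p]} {N : ℕ} (hN : N ≠ 0)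
    (h : x.appr (Nat.log p N + 1) = N) :
    x.appr (Nat.log p N) = N % p ^ (Nat.log p N) := by
  set s := Nat.log p N with hs
  obtain ⟨c, hc⟩ := x.dvd_appr_sub_appr s (s + 1) (Nat.le_succ s)
  have hmono := x.appr_mono (Nat.le_succ s)
  rw [h] at hc hmono
  have hlt := x.appr_lt s
  have hNeq : N = x.appr s + p ^ s * c := by omega
  rw [hNeq, mul_comm, Nat.add_mul_mod_self_right, Nat.mod_eq_of_lt hlt]

lemma trunc_succ_of_mem {x : ℤ_[p]} {N : ℕ} (hN : N ≠ 0)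
    (h : x.appr (Nat.log p N + 1) = N) : trunc x (N + 1) = N := by
  refine le_antisymm ?_ ?_
  · have := trunc_lt (x := x) (N := N + 1) (by omega)
    omega
  · calc N = x.appr (Nat.log p N + 1) := h.symm
      _ ≤ trunc x (N + 1) := appr_le_trunc (by omega)

lemma trunc_of_mem {x : ℤ_[p]} {N : ℕ} (hN : N ≠ 0)
    (h : x.appr (Nat.log p N + 1) = N) :
    trunc x N = N % p ^ (Nat.log p N) := by
  set s := Nat.log p N with hs
  have hps : p ^ s ≤ N := Nat.pow_log_le_self p hN
  have hlt := x.appr_lt s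
  rw [← appr_log_eq_mod hN h, ← hs]
  refine le_antisymm ?_ (appr_le_trunc (by omega))
  have hJ : truncIdx x N ≤ s := by
    by_contra hc
    push_neg at hc
    have h1 : x.appr (s + 1) ≤ x.appr (truncIdx x N) := x.appr_mono hc
    have h2 : trunc x N < N := trunc_lt (Nat.pos_of_ne_zero hN)
    rw [h] at h1
    exact absurd (lt_of_le_of_lt h1 h2) (lt_irrefl N)
  exact x.appr_mono hJ

lemma trunc_succ_of_not_mem {x : ℤ_[p]} {N : ℕ} (hN : N ≠ 0)
    (h : x.appr (Nat.log p N + 1) ≠ N) : trunc x (N + 1) = trunc x N := by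
  have hNpos := Nat.pos_of_ne_zero hN
  refine le_antisymm ?_ ?_
  · have h1 : trunc x (N + 1) < N + 1 := trunc_lt (by omega)
    have h2 : trunc x (N + 1) ≠ N := by
      intro he
      exact h (appr_succ_log_eq hN he)
    exact appr_le_trunc (show x.appr (truncIdx x (N + 1)) < N by
      have : trunc x (N + 1) < N := by omega
      exact this)
  · exact appr_le_trunc (lt_of_lt_of_le (trunc_lt hNpos) (Nat.le_succ N))


end Aux

section Aux2
open PadicInt
variable {p : ℕ} [Fact p.Prime]

lemma partial_sum_eq (f : ℤ_[p] → ℚ_[p]) {N : ℕ} (hN : 1 ≤ N) (x : ℤ_[p]) :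
    ∑ n ∈ Finset.range N, vdpCoeff p f n * vdpE p n x = f ((trunc x N : ℕ) : ℤ_[p]) := by
  induction N, hN using Nat.le_induction with
  | base =>
    have ht : trunc x 1 = 0 := by have := trunc_lt (x := x) (N := 1) one_pos; omega
    simp [vdpCoeff, vdpE, ht]
  | succ N hN ih =>
    have hNne : N ≠ 0 := by omega
    rw [Finset.sum_range_succ, ih]
    by_cases hmem : x.appr (Nat.log p N + 1) = N
    · have hE : vdpE p N x = 1 := by
        have hx : x ∈ {y : ℤ_[p] | ‖y - (N : ℤ_[p])‖ < 1 / (N : ℝ)} :=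
          (mem_disc_iff hNne).2 hmem
        rw [vdpE, if_neg hNne, Set.indicator_of_mem hx]
      rw [hE, mul_one, vdpCoeff, if_neg hNne, trunc_succ_of_mem hNne hmem,
        trunc_of_mem hNne hmem]
      show f _ + (f _ - f ((nMinusDigit p N : ℕ) : ℤ_[p])) = f _
      rw [nMinusDigit]
      ring
    · have hE : vdpE p N x = 0 := by
        have hx : x ∉ {y : ℤ_[p] | ‖y - (N : ℤ_[p])‖ < 1 / (N : ℝ)} :=
          fun hc => hmem ((mem_disc_iff hNne).1 hc)
        rw [vdpE, if_neg hNne, Set.indicator_of_notMem hx]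
      rw [hE, mul_zero, add_zero, trunc_succ_of_not_mem hNne hmem]


end Aux2

/-- (van der Put expansion) For every continuous `f : ℤ_[p] → ℚ_[p]`, the series
`Σ_{n=0}^∞ v_n e_n` converges uniformly (in sup-norm) to `f`. -/
theorem vanDerPut_expansion (p : ℕ) [Fact p.Prime] (f : C(ℤ_[p], ℚ_[p])) :
    TendstoUniformly
      (fun (N : ℕ) (x : ℤ_[p]) => ∑ n ∈ Finset.range N, vdpCoeff p (⇑f) n * vdpE p n x)
      (⇑f) Filter.atTop := by
  have hp : 1 < p := (Fact.out : p.Prime).one_lt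
  rw [Metric.tendstoUniformly_iff]
  intro ε hε
  have huc : UniformContinuous f := CompactSpace.uniformContinuous_of_continuous f.continuous
  rw [Metric.uniformContinuous_iff] at huc
  obtain ⟨δ, hδ, hfd⟩ := huc ε hε
  obtain ⟨k, hk⟩ := exists_pow_lt_of_lt_one hδ
    (show (1 / p : ℝ) < 1 by
      rw [div_lt_one (by positivity)]; exact_mod_cast hp)
  rw [Filter.eventually_atTop]
  refine ⟨p ^ k, fun N hNk x => ?_⟩
  have hN1 : 1 ≤ N := le_trans (Nat.one_le_pow _ _ (by omega)) hNk
  rw [partial_sum_eq (⇑f) hN1 x]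
  apply hfd
  -- dist x (trunc x N) < δ
  have hJk : k ≤ truncIdx x N := by
    refine Nat.le_findGreatest (le_trans (le_of_lt (Nat.lt_pow_self (n := k) hp)) hNk) ?_
    exact lt_of_lt_of_le (x.appr_lt k) hNk
  have hnorm : ‖x - ((trunc x N : ℕ) : ℤ_[p])‖ ≤ (p : ℝ) ^ (-(truncIdx x N : ℤ)) := by
    rw [show (-(truncIdx x N : ℤ)) = (-(truncIdx x N : ℕ) : ℤ) by push_cast; ring,
      PadicInt.norm_le_pow_iff_mem_span_pow]
    exact x.appr_spec (truncIdx x N)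
  have hle : (p : ℝ) ^ (-(truncIdx x N : ℤ)) ≤ (p : ℝ) ^ (-(k : ℤ)) := by
    apply zpow_le_zpow_right₀ (by exact_mod_cast hp.le)
    omega
  have hk' : (p : ℝ) ^ (-(k : ℤ)) < δ := by
    rw [zpow_neg, zpow_natCast]
    calc ((p : ℝ) ^ k)⁻¹ = (1 / p) ^ k := by rw [one_div, inv_pow]
      _ < δ := hk
  calc dist x ((trunc x N : ℕ) : ℤ_[p]) = ‖x - ((trunc x N : ℕ) : ℤ_[p])‖ := dist_eq_norm _ _
    _ ≤ (p : ℝ) ^ (-(truncIdx x N : ℤ)) := hnorm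
    _ ≤ (p : ℝ) ^ (-(k : ℤ)) := hle
    _ < δ := hk'
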